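/- Suppose that for all integers ℓ with ℓ₁ < ℓ ≤ ℓ₂ one has x_ℓ ≤ x_{ℓ−1}/2 + c + Σ_{j=ℓ₁}^{ℓ−1} b_j x_j. Then x_{ℓ₂} ≤ 2·(x_{ℓ₁} + c)·exp(3·Σ_{j=ℓ₁}^{ℓ₂−1} b_j). -/

import Mathlib

open Finset

lemma gronwall_icc_insert (a b : ℤ) (h : a ≤ b + 1) :
    Finset.Icc a (b + 1) = insert (b + 1) (Finset.Icc a b) := by
  ext y; simp only [Finset.mem_Icc, Finset.mem_insert]; omega

lemma gronwall_telescope (ℓ₁ : ℤ) (f : ℤ → ℝ) (n : ℕ) :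
    ∑ j ∈ Finset.Icc ℓ₁ (ℓ₁ + n - 1), f j * ∏ i ∈ Finset.Icc ℓ₁ (j - 1), (1 + f i)
      = ∏ i ∈ Finset.Icc ℓ₁ (ℓ₁ + n - 1), (1 + f i) - 1 := by
  induction n with
  | zero =>
      have : Finset.Icc ℓ₁ (ℓ₁ + (0:ℕ) - 1) = ∅ :=
        Finset.Icc_eq_empty_of_lt (by push_cast; omega)
      simp [this]
  | succ m ih =>
      have h1 : ℓ₁ + ((m:ℕ)+1:ℕ) - 1 = (ℓ₁ + (m:ℕ) - 1) + 1 := by push_cast; ring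
      have hnot : (ℓ₁ + (m:ℕ) - 1) + 1 ∉ Finset.Icc ℓ₁ (ℓ₁ + (m:ℕ) - 1) := by
        simp
      rw [h1, gronwall_icc_insert _ _ (by omega), Finset.sum_insert hnot,
          Finset.prod_insert hnot, ih]
      have h2 : ℓ₁ + (m:ℕ) - 1 + 1 - 1 = ℓ₁ + (m:ℕ) - 1 := by ring
      rw [h2]; ring

/-- Gronwall-type estimate: if for all `ℓ₁ < ℓ ≤ ℓ₂`
`x_ℓ ≤ x_{ℓ-1}/2 + c + Σ_{j=ℓ₁}^{ℓ-1} b_j x_j`, with `x, b ≥ 0` and `c > 0`, then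
`x_{ℓ₂} ≤ 2 (x_{ℓ₁} + c) exp(3 Σ_{j=ℓ₁}^{ℓ₂-1} b_j)`. -/
theorem gronwall_type_estimate
    (ℓ₁ ℓ₂ : ℤ) (hℓ : ℓ₁ < ℓ₂) (c : ℝ) (hc : 0 < c)
    (x b : ℤ → ℝ)
    (hx : ∀ ℓ, ℓ₁ ≤ ℓ → ℓ ≤ ℓ₂ → 0 ≤ x ℓ)
    (hb : ∀ ℓ, ℓ₁ ≤ ℓ → ℓ ≤ ℓ₂ - 1 → 0 ≤ b ℓ)
    (hrec : ∀ ℓ, ℓ₁ < ℓ → ℓ ≤ ℓ₂ →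
      x ℓ ≤ x (ℓ - 1) / 2 + c + ∑ j ∈ Finset.Icc ℓ₁ (ℓ - 1), b j * x j) :
    x ℓ₂ ≤ 2 * (x ℓ₁ + c) * Real.exp (3 * ∑ j ∈ Finset.Icc ℓ₁ (ℓ₂ - 1), b j) := by
  set A := x ℓ₁ + c with hA
  have hx1 : 0 ≤ x ℓ₁ := hx ℓ₁ le_rfl hℓ.le
  have hA0 : 0 < A := by positivity
  -- factors ≥ 1 on relevant range
  have hfac : ∀ i ∈ Finset.Icc ℓ₁ (ℓ₂ - 1), (1:ℝ) ≤ 1 + 3 * b i := by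
    intro i hi
    rw [Finset.mem_Icc] at hi
    have := hb i hi.1 hi.2
    linarith
  have hPone : ∀ m : ℤ, m ≤ ℓ₂ - 1 →
      (1:ℝ) ≤ ∏ i ∈ Finset.Icc ℓ₁ m, (1 + 3 * b i) := by
    intro m hm
    calc (1:ℝ) = ∏ _i ∈ Finset.Icc ℓ₁ m, (1:ℝ) := by simp
      _ ≤ ∏ i ∈ Finset.Icc ℓ₁ m, (1 + 3 * b i) := by
          refine Finset.prod_le_prod (fun i _ => zero_le_one) ?_
          intro i hi
          exact hfac i (Finset.mem_Icc.mpr ⟨(Finset.mem_Icc.mp hi).1,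
            le_trans (Finset.mem_Icc.mp hi).2 hm⟩)
  have key : ∀ n : ℕ, ℓ₁ + n ≤ ℓ₂ →
      x (ℓ₁ + n) ≤ 2 * A * ∏ j ∈ Finset.Icc ℓ₁ (ℓ₁ + n - 1), (1 + 3 * b j) := by
    intro n
    induction n using Nat.strong_induction_on with
    | _ n ih =>
      intro hn
      match n with
      | 0 =>
          have : Finset.Icc ℓ₁ (ℓ₁ + (0:ℕ) - 1) = ∅ :=
            Finset.Icc_eq_empty_of_lt (by push_cast; omega)
          simp only [this, Finset.prod_empty, mul_one]
          push_cast
          simp only [add_zero]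
          linarith
      | (m+1) =>
          obtain ⟨ℓ, hℓdef⟩ : ∃ ℓ : ℤ, ℓ = ℓ₁ + (((m:ℕ)+1:ℕ):ℤ) := ⟨_, rfl⟩
          rw [← hℓdef] at hn ⊢
          have hℓeq : ℓ = ℓ₁ + (m:ℤ) + 1 := by rw [hℓdef]; push_cast; ring
          have hℓ2 : ℓ ≤ ℓ₂ := hn
          have hℓ1 : ℓ₁ < ℓ := by omega
          have hprev : x (ℓ - 1) ≤ 2 * A * ∏ j ∈ Finset.Icc ℓ₁ (ℓ - 1 - 1), (1 + 3 * b j) := by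
            have := ih m (by omega) (by omega)
            have he : ℓ₁ + (m:ℤ) = ℓ - 1 := by omega
            rwa [he] at this
          -- bound each x j for j in Icc ℓ₁ (ℓ-1)
          have hxj : ∀ j ∈ Finset.Icc ℓ₁ (ℓ - 1),
              x j ≤ 2 * A * ∏ i ∈ Finset.Icc ℓ₁ (j - 1), (1 + 3 * b i) := by
            intro j hj
            rw [Finset.mem_Icc] at hj
            obtain ⟨k, hk⟩ : ∃ k : ℕ, j = ℓ₁ + k := ⟨(j - ℓ₁).toNat, by omega⟩
            have := ih k (by omega) (by omega)
            rwa [← hk] at this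
          have hsum : ∑ j ∈ Finset.Icc ℓ₁ (ℓ - 1), b j * x j
              ≤ (2 * A / 3) * (∏ i ∈ Finset.Icc ℓ₁ (ℓ - 1), (1 + 3 * b i) - 1) := by
            have htel := gronwall_telescope ℓ₁ (fun i => 3 * b i) (m + 1)
            push_cast at htel
            have hℓe : ℓ₁ + ((m:ℤ) + 1) - 1 = ℓ - 1 := by omega
            rw [hℓe] at htel
            calc ∑ j ∈ Finset.Icc ℓ₁ (ℓ - 1), b j * x j
                ≤ ∑ j ∈ Finset.Icc ℓ₁ (ℓ - 1),
                    (2 * A / 3) * ((3 * b j) * ∏ i ∈ Finset.Icc ℓ₁ (j - 1), (1 + 3 * b i)) := by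
                  refine Finset.sum_le_sum ?_
                  intro j hj
                  have hj' := Finset.mem_Icc.mp hj
                  have hbj : 0 ≤ b j := hb j hj'.1 (by omega)
                  have := hxj j hj
                  calc b j * x j ≤ b j * (2 * A * ∏ i ∈ Finset.Icc ℓ₁ (j - 1), (1 + 3 * b i)) :=
                        mul_le_mul_of_nonneg_left this hbj
                    _ = (2 * A / 3) * ((3 * b j) * ∏ i ∈ Finset.Icc ℓ₁ (j - 1), (1 + 3 * b i)) := by
                        ring
              _ = (2 * A / 3) * ∑ j ∈ Finset.Icc ℓ₁ (ℓ - 1),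
                    (3 * b j) * ∏ i ∈ Finset.Icc ℓ₁ (j - 1), (1 + 3 * b i) := by
                  rw [Finset.mul_sum]
              _ = (2 * A / 3) * (∏ i ∈ Finset.Icc ℓ₁ (ℓ - 1), (1 + 3 * b i) - 1) := by
                  rw [htel]
          have hPmono : ∏ j ∈ Finset.Icc ℓ₁ (ℓ - 1 - 1), (1 + 3 * b j)
              ≤ ∏ j ∈ Finset.Icc ℓ₁ (ℓ - 1), (1 + 3 * b j) := by
            have hsmall := hPone (ℓ - 1 - 1) (by omega)
            have hbl : 0 ≤ b (ℓ - 1) := hb (ℓ - 1) (by omega) (by omega)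
            rw [show ℓ - 1 = (ℓ - 1 - 1) + 1 by ring, gronwall_icc_insert _ _ (by omega),
              Finset.prod_insert (by simp)]
            have : ℓ - 1 - 1 + 1 = ℓ - 1 := by ring
            rw [this]
            nlinarith
          have hP1 : (1:ℝ) ≤ ∏ j ∈ Finset.Icc ℓ₁ (ℓ - 1), (1 + 3 * b j) :=
            hPone (ℓ - 1) (by omega)
          have hmain := hrec ℓ hℓ1 hℓ2
          have hgoal : x ℓ ≤ 2 * A * ∏ j ∈ Finset.Icc ℓ₁ (ℓ - 1), (1 + 3 * b j) := by
            have hcA : c ≤ A := by linarith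
            nlinarith [hmain, hprev, hsum, hPmono, hP1, hA0]
          exact hgoal
  -- apply key at n = ℓ₂ - ℓ₁
  obtain ⟨n, hn⟩ : ∃ n : ℕ, ℓ₂ = ℓ₁ + n := ⟨(ℓ₂ - ℓ₁).toNat, by omega⟩
  have hkey := key n (by omega)
  rw [← hn] at hkey
  refine hkey.trans ?_
  have hprod_exp : ∏ j ∈ Finset.Icc ℓ₁ (ℓ₂ - 1), (1 + 3 * b j)
      ≤ Real.exp (3 * ∑ j ∈ Finset.Icc ℓ₁ (ℓ₂ - 1), b j) := by
    rw [Finset.mul_sum, Real.exp_sum]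
    refine Finset.prod_le_prod ?_ ?_
    · intro i hi; linarith [hfac i hi]
    · intro i hi
      have := Real.add_one_le_exp (3 * b i)
      linarith
  have := mul_le_mul_of_nonneg_left hprod_exp (by positivity : (0:ℝ) ≤ 2 * A)
  linarith
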